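/- arXiv:1310.4862 — 3 statements merged into one kernel-verified Lean document; each statement's English description precedes it below -/
import Mathlib

section
/- Let G = G* ∈ E(τ;I) be a hermitian element such that |||G − (3/2)I||| ≤ 1 (so in particular G is positive and invertible). Then G^{1/2} ∈ E(τ;I), and there is a universal constant C (independent of G, X, τ, I) such that |||[G^{1/2}, X]||| ≤ C |||[G, X]||| for every X ∈ E(τ;I), and |[G^{1/2}, τ]|_I ≤ C |[G, τ]|_I. -/
noncomputable section

open Filter Topology

/-- The algebra `B(H)` of bounded operators on `H`. -/
abbrev Op (H : Type) [NormedAddCommGroup H] [InnerProductSpace ℂ H] : Type := H →L[ℂ] H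

variable {H : Type} [NormedAddCommGroup H] [InnerProductSpace ℂ H] [CompleteSpace H]

/-- `X` is a finite-rank operator (`X ∈ R(H)`). -/
def FinRank (X : Op H) : Prop :=
  FiniteDimensional ℂ (LinearMap.range (X : H →ₗ[ℂ] H))

/-- `P` is a finite-rank orthogonal projection (`P ∈ P(H)`). -/
def IsFinProj (P : Op H) : Prop :=
  FinRank P ∧ IsSelfAdjoint P ∧ P * P = P

/-- The Loewner order `A ≤ B` on hermitian operators. -/
def opLE (A B : Op H) : Prop := (B - A).IsPositive

/-- `R_1^+(H) = {A ∈ R(H) : 0 ≤ A ≤ I}`. -/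
def R1plus (H : Type) [NormedAddCommGroup H] [InnerProductSpace ℂ H] [CompleteSpace H] :
    Set (Op H) :=
  {A | FinRank A ∧ A.IsPositive ∧ ((1 : Op H) - A).IsPositive}

/-- A (symmetrically) normed ideal `(I, |·|_I)` of compact operators on `H`. -/
structure SymmNormedIdeal (H : Type) [NormedAddCommGroup H] [InnerProductSpace ℂ H]
    [CompleteSpace H] : Type where
  carrier : Set (Op H)
  nrm : Op H → ℝ
  nontrivial' : ∃ X ∈ carrier, X ≠ 0
  compact' : ∀ X ∈ carrier, IsCompactOperator (X : H → H)
  finRank_mem' : ∀ X : Op H, FinRank X → X ∈ carrier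
  zero_mem' : (0 : Op H) ∈ carrier
  add_mem' : ∀ X ∈ carrier, ∀ Y ∈ carrier, X + Y ∈ carrier
  smul_mem' : ∀ (c : ℂ), ∀ X ∈ carrier, c • X ∈ carrier
  mul_mem_left' : ∀ (A : Op H), ∀ X ∈ carrier, A * X ∈ carrier
  mul_mem_right' : ∀ (A : Op H), ∀ X ∈ carrier, X * A ∈ carrier
  adjoint_mem' : ∀ X ∈ carrier, ContinuousLinearMap.adjoint X ∈ carrier
  nrm_nonneg' : ∀ X : Op H, 0 ≤ nrm X
  nrm_zero' : nrm 0 = 0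
  nrm_eq_zero' : ∀ X ∈ carrier, nrm X = 0 → X = 0
  nrm_add_le' : ∀ X ∈ carrier, ∀ Y ∈ carrier, nrm (X + Y) ≤ nrm X + nrm Y
  nrm_smul' : ∀ (c : ℂ) (X : Op H), nrm (c • X) = ‖c‖ * nrm X
  nrm_mul_left' : ∀ (A : Op H), ∀ X ∈ carrier, nrm (A * X) ≤ ‖A‖ * nrm X
  nrm_mul_right' : ∀ (A : Op H), ∀ X ∈ carrier, nrm (X * A) ≤ nrm X * ‖A‖
  opNorm_le_nrm' : ∀ X ∈ carrier, ‖X‖ ≤ nrm X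
  nrm_adjoint' : ∀ X : Op H, nrm (ContinuousLinearMap.adjoint X) = nrm X
  nrm_rank_le_one' : ∀ X : Op H, FinRank X →
    Module.finrank ℂ (LinearMap.range (X : H →ₗ[ℂ] H)) ≤ 1 → nrm X = ‖X‖
  complete' : ∀ f : ℕ → Op H, (∀ k, f k ∈ carrier) →
    (∀ ε : ℝ, 0 < ε → ∃ N, ∀ m ≥ N, ∀ k ≥ N, nrm (f m - f k) < ε) →
    ∃ X ∈ carrier, Tendsto (fun k => nrm (f k - X)) atTop (nhds 0)

variable {n : ℕ}

/-- `|[X,τ]|_I = max_j |[X,T_j]|_I`. -/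
def commNrm (I : SymmNormedIdeal H) (τ : Fin n → Op H) (X : Op H) : ℝ :=
  ⨆ j, I.nrm (X * τ j - τ j * X)

/-- `X ∈ E(τ;I)`, i.e. `[X,T_j] ∈ I` for all `j`. -/
def memE (I : SymmNormedIdeal H) (τ : Fin n → Op H) (X : Op H) : Prop :=
  ∀ j, X * τ j - τ j * X ∈ I.carrier

/-- the norm `|||X||| = ‖X‖ + |[X,τ]|_I` on `E(τ;I)`. -/
def tnorm (I : SymmNormedIdeal H) (τ : Fin n → Op H) (X : Op H) : ℝ :=
  ‖X‖ + commNrm I τ X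

/-- `X ∈ K(τ;I) = E(τ;I) ∩ K(H)`. -/
def memK (I : SymmNormedIdeal H) (τ : Fin n → Op H) (X : Op H) : Prop :=
  memE I τ X ∧ IsCompactOperator (X : H → H)

/-- The filter of the upward-directed order on `R_1^+(H)`. -/
def dirFilter (H : Type) [NormedAddCommGroup H] [InnerProductSpace ℂ H] [CompleteSpace H] :
    Filter (R1plus H) :=
  ⨅ A₀ : R1plus H, Filter.principal {A : R1plus H | opLE (A₀ : Op H) (A : Op H)}

/-- `k_I(τ) = liminf_{A ∈ R_1^+(H)} |[A,τ]|_I`. -/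
def kI (I : SymmNormedIdeal H) (τ : Fin n → Op H) : ℝ :=
  liminf (fun A : R1plus H => commNrm I τ (A : Op H)) (dirFilter H)

/-- `R(H)` is dense in `I`, i.e. `I = I⁰`. -/
def FRDense (I : SymmNormedIdeal H) : Prop :=
  ∀ X ∈ I.carrier, ∀ ε : ℝ, 0 < ε → ∃ R : Op H, FinRank R ∧ I.nrm (X - R) < ε

/-- the essential norm `‖p(X)‖`, the norm of the image of `X` in the Calkin algebra. -/
def essNorm (X : Op H) : ℝ :=
  sInf {c : ℝ | ∃ K : Op H, IsCompactOperator (K : H → H) ∧ c = ‖X - K‖}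

set_option linter.unusedSectionVars false
set_option linter.unusedVariables false
section Helpers

variable {H : Type} [NormedAddCommGroup H] [InnerProductSpace ℂ H] [CompleteSpace H]
variable {n : ℕ} {I : SymmNormedIdeal H} {τ : Fin n → Op H}

lemma SymmNormedIdeal.sub_mem {X Y : Op H} (hX : X ∈ I.carrier) (hY : Y ∈ I.carrier) :
    X - Y ∈ I.carrier := by
  have := I.add_mem' X hX _ (I.smul_mem' (-1) Y hY)
  simpa [sub_eq_add_neg] using this

lemma comm_add (X Y T : Op H) :
    (X + Y) * T - T * (X + Y) = (X * T - T * X) + (Y * T - T * Y) := by noncomm_ring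

lemma comm_smul (c : ℂ) (X T : Op H) :
    (c • X) * T - T * (c • X) = c • (X * T - T * X) := by
  simp [smul_mul_assoc, mul_smul_comm, smul_sub]

lemma comm_mul (X Y T : Op H) :
    (X * Y) * T - T * (X * Y) = X * (Y * T - T * Y) + (X * T - T * X) * Y := by noncomm_ring

lemma comm_sub (X Y T : Op H) :
    (X - Y) * T - T * (X - Y) = (X * T - T * X) - (Y * T - T * Y) := by noncomm_ring

lemma memE.add {X Y : Op H} (hX : memE I τ X) (hY : memE I τ Y) : memE I τ (X + Y) := fun j => by
  rw [comm_add]; exact I.add_mem' _ (hX j) _ (hY j)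

lemma memE.smul (c : ℂ) {X : Op H} (hX : memE I τ X) : memE I τ (c • X) := fun j => by
  rw [comm_smul]; exact I.smul_mem' c _ (hX j)

lemma memE.sub {X Y : Op H} (hX : memE I τ X) (hY : memE I τ Y) : memE I τ (X - Y) := fun j => by
  rw [comm_sub]; exact I.sub_mem (hX j) (hY j)

lemma memE.mul {X Y : Op H} (hX : memE I τ X) (hY : memE I τ Y) : memE I τ (X * Y) := fun j => by
  rw [comm_mul]
  exact I.add_mem' _ (I.mul_mem_left' X _ (hY j)) _ (I.mul_mem_right' Y _ (hX j))

lemma memE.one : memE I τ (1 : Op H) := fun j => by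
  simpa using I.zero_mem'

lemma memE.zero : memE I τ (0 : Op H) := fun j => by
  simpa using I.zero_mem'

lemma commNrm_nonneg (X : Op H) : 0 ≤ commNrm I τ X :=
  Real.iSup_nonneg fun j => I.nrm_nonneg' _

lemma nrm_le_commNrm (X : Op H) (j : Fin n) :
    I.nrm (X * τ j - τ j * X) ≤ commNrm I τ X := by
  unfold commNrm
  exact le_ciSup (f := fun j => I.nrm (X * τ j - τ j * X)) (Set.Finite.bddAbove (Set.finite_range _)) j

lemma commNrm_le {X : Op H} {c : ℝ} (hc : 0 ≤ c)
    (h : ∀ j, I.nrm (X * τ j - τ j * X) ≤ c) : commNrm I τ X ≤ c :=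
  Real.iSup_le h hc

lemma commNrm_add_le {X Y : Op H} (hX : memE I τ X) (hY : memE I τ Y) :
    commNrm I τ (X + Y) ≤ commNrm I τ X + commNrm I τ Y := by
  refine commNrm_le (by have := commNrm_nonneg (I := I) (τ := τ) X; have := commNrm_nonneg (I := I) (τ := τ) Y; have := norm_nonneg X; have := norm_nonneg Y; positivity) fun j => ?_
  rw [comm_add]
  exact (I.nrm_add_le' _ (hX j) _ (hY j)).trans
    (add_le_add (nrm_le_commNrm X j) (nrm_le_commNrm Y j))

lemma commNrm_sub_le {X Y : Op H} (hX : memE I τ X) (hY : memE I τ Y) :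
    commNrm I τ (X - Y) ≤ commNrm I τ X + commNrm I τ Y := by
  refine commNrm_le (by have := commNrm_nonneg (I := I) (τ := τ) X; have := commNrm_nonneg (I := I) (τ := τ) Y; have := norm_nonneg X; have := norm_nonneg Y; positivity) fun j => ?_
  rw [comm_sub, sub_eq_add_neg]
  have h1 : -(Y * τ j - τ j * Y) = (-1 : ℂ) • (Y * τ j - τ j * Y) := by simp
  calc I.nrm ((X * τ j - τ j * X) + -(Y * τ j - τ j * Y))
      ≤ I.nrm (X * τ j - τ j * X) + I.nrm (-(Y * τ j - τ j * Y)) := by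
        refine I.nrm_add_le' _ (hX j) _ ?_
        rw [h1]; exact I.smul_mem' _ _ (hY j)
    _ ≤ commNrm I τ X + commNrm I τ Y := by
        refine add_le_add (nrm_le_commNrm X j) ?_
        rw [h1, I.nrm_smul']
        simpa using nrm_le_commNrm Y j

lemma commNrm_smul (c : ℂ) (X : Op H) : commNrm I τ (c • X) = ‖c‖ * commNrm I τ X := by
  unfold commNrm
  rw [Real.mul_iSup_of_nonneg (norm_nonneg c)]
  congr 1; funext j
  rw [comm_smul, I.nrm_smul']

lemma commNrm_zero : commNrm I τ (0 : Op H) = 0 := by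
  refine le_antisymm (commNrm_le le_rfl fun j => ?_) (commNrm_nonneg 0)
  simp [I.nrm_zero']

lemma commNrm_one : commNrm I τ (1 : Op H) = 0 := by
  refine le_antisymm (commNrm_le le_rfl fun j => ?_) (commNrm_nonneg 1)
  simp [I.nrm_zero']

lemma commNrm_mul_le {X Y : Op H} (hX : memE I τ X) (hY : memE I τ Y) :
    commNrm I τ (X * Y) ≤ ‖X‖ * commNrm I τ Y + commNrm I τ X * ‖Y‖ := by
  refine commNrm_le (by have := commNrm_nonneg (I := I) (τ := τ) X; have := commNrm_nonneg (I := I) (τ := τ) Y; have := norm_nonneg X; have := norm_nonneg Y; positivity) fun j => ?_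
  rw [comm_mul]
  calc I.nrm (X * (Y * τ j - τ j * Y) + (X * τ j - τ j * X) * Y)
      ≤ I.nrm (X * (Y * τ j - τ j * Y)) + I.nrm ((X * τ j - τ j * X) * Y) :=
        I.nrm_add_le' _ (I.mul_mem_left' X _ (hY j)) _ (I.mul_mem_right' Y _ (hX j))
    _ ≤ ‖X‖ * I.nrm (Y * τ j - τ j * Y) + I.nrm (X * τ j - τ j * X) * ‖Y‖ :=
        add_le_add (I.nrm_mul_left' X _ (hY j)) (I.nrm_mul_right' Y _ (hX j))
    _ ≤ ‖X‖ * commNrm I τ Y + commNrm I τ X * ‖Y‖ :=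
        add_le_add (mul_le_mul_of_nonneg_left (nrm_le_commNrm Y j) (norm_nonneg X))
          (mul_le_mul_of_nonneg_right (nrm_le_commNrm X j) (norm_nonneg Y))

lemma norm_le_tnorm (X : Op H) : ‖X‖ ≤ tnorm I τ X :=
  le_add_of_nonneg_right (commNrm_nonneg X)

lemma commNrm_le_tnorm (X : Op H) : commNrm I τ X ≤ tnorm I τ X :=
  le_add_of_nonneg_left (norm_nonneg X)

lemma tnorm_nonneg (X : Op H) : 0 ≤ tnorm I τ X :=
  add_nonneg (norm_nonneg X) (commNrm_nonneg X)

lemma tnorm_add_le {X Y : Op H} (hX : memE I τ X) (hY : memE I τ Y) :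
    tnorm I τ (X + Y) ≤ tnorm I τ X + tnorm I τ Y := by
  have := commNrm_add_le hX hY
  have := norm_add_le X Y
  unfold tnorm; linarith

lemma tnorm_sub_le {X Y : Op H} (hX : memE I τ X) (hY : memE I τ Y) :
    tnorm I τ (X - Y) ≤ tnorm I τ X + tnorm I τ Y := by
  have := commNrm_sub_le hX hY
  have := norm_sub_le X Y
  unfold tnorm; linarith

lemma tnorm_smul (c : ℂ) (X : Op H) : tnorm I τ (c • X) = ‖c‖ * tnorm I τ X := by
  unfold tnorm
  rw [commNrm_smul, norm_smul, mul_add]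

lemma tnorm_zero : tnorm I τ (0 : Op H) = 0 := by
  unfold tnorm; rw [commNrm_zero]; simp

lemma tnorm_mul_le {X Y : Op H} (hX : memE I τ X) (hY : memE I τ Y) :
    tnorm I τ (X * Y) ≤ tnorm I τ X * tnorm I τ Y := by
  have h1 := commNrm_mul_le hX hY
  have h2 := norm_mul_le X Y
  have h3 := commNrm_nonneg (I := I) (τ := τ) X
  have h4 := commNrm_nonneg (I := I) (τ := τ) Y
  have h5 := norm_nonneg X
  have h6 := norm_nonneg Y
  unfold tnorm; nlinarith

end Helpers
section IterSec

variable {H : Type} [NormedAddCommGroup H] [InnerProductSpace ℂ H] [CompleteSpace H]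
variable {n : ℕ} {I : SymmNormedIdeal H} {τ : Fin n → Op H}

/-- The iteration `y_0 = 0`, `y_{k+1} = (a + y_k^2)/2` converging to `1 - sqrt(1-a)`. -/
noncomputable def sqIter (a : Op H) : ℕ → Op H
  | 0 => 0
  | k+1 => (2⁻¹ : ℂ) • (a + sqIter a k * sqIter a k)

@[simp] lemma sqIter_zero (a : Op H) : sqIter a 0 = 0 := rfl

lemma sqIter_succ (a : Op H) (k : ℕ) :
    sqIter a (k+1) = (2⁻¹ : ℂ) • (a + sqIter a k * sqIter a k) := rfl

lemma star_two_inv : star (2⁻¹ : ℂ) = 2⁻¹ := by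
  simp

lemma norm_two_inv : ‖(2⁻¹ : ℂ)‖ = 2⁻¹ := by
  have : ((2⁻¹:ℝ):ℂ) = (2⁻¹:ℂ) := by norm_num
  rw [← this, Complex.norm_real]; norm_num

lemma sqIter_memE {a : Op H} (ha : memE I τ a) : ∀ k, memE I τ (sqIter a k)
  | 0 => memE.zero
  | (k+1) => memE.smul _ (ha.add ((sqIter_memE ha k).mul (sqIter_memE ha k)))

lemma sqIter_sa {a : Op H} (ha : IsSelfAdjoint a) : ∀ k, IsSelfAdjoint (sqIter a k)
  | 0 => (.zero (Op H))
  | (k+1) => by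
      have hk := sqIter_sa ha k
      rw [sqIter_succ, IsSelfAdjoint, star_smul, star_add, star_mul, hk.star_eq, ha.star_eq,
        star_two_inv]

lemma sqIter_tnorm {a : Op H} (haE : memE I τ a) (hat : tnorm I τ a ≤ 2/3) :
    ∀ k, tnorm I τ (sqIter a k) ≤ 1/2
  | 0 => by rw [sqIter_zero, tnorm_zero]; norm_num
  | (k+1) => by
      rw [sqIter_succ, tnorm_smul, norm_two_inv]
      have hk := sqIter_tnorm haE hat k
      have hkE := sqIter_memE (I := I) (τ := τ) haE k
      have h1 : tnorm I τ (sqIter a k * sqIter a k) ≤ 1/4 := by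
        have := tnorm_mul_le hkE hkE
        have h0 := tnorm_nonneg (I := I) (τ := τ) (sqIter a k)
        nlinarith
      have := tnorm_add_le haE (hkE.mul hkE)
      have := tnorm_nonneg (I := I) (τ := τ) (a + sqIter a k * sqIter a k)
      nlinarith

lemma sqIter_diff_tnorm {a : Op H} (haE : memE I τ a) (hat : tnorm I τ a ≤ 2/3) :
    ∀ k, tnorm I τ (sqIter a (k+1) - sqIter a k) ≤ (1/3) * (1/2)^k
  | 0 => by
      have : sqIter a 1 - sqIter a 0 = (2⁻¹ : ℂ) • a := by
        rw [sqIter_succ]; simp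
      rw [this, tnorm_smul, norm_two_inv, pow_zero]
      linarith
  | (k+1) => by
      have hbE : memE I τ (sqIter a (k+1)) := sqIter_memE haE (k+1)
      have hcE : memE I τ (sqIter a k) := sqIter_memE haE k
      have hid : sqIter a (k+2) - sqIter a (k+1)
          = (2⁻¹ : ℂ) • (sqIter a (k+1) * (sqIter a (k+1) - sqIter a k)
              + (sqIter a (k+1) - sqIter a k) * sqIter a k) := by
        show ((2⁻¹ : ℂ) • (a + sqIter a (k+1) * sqIter a (k+1)))
            - ((2⁻¹ : ℂ) • (a + sqIter a k * sqIter a k)) = _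
        rw [← smul_sub]
        congr 1
        noncomm_ring
      rw [hid, tnorm_smul, norm_two_inv]
      have hΔ' := sqIter_diff_tnorm haE hat k
      have hb := sqIter_tnorm haE hat (k+1)
      have hc := sqIter_tnorm haE hat k
      have h1 := tnorm_mul_le hbE (hbE.sub hcE)
      have h2 := tnorm_mul_le (hbE.sub hcE) hcE
      have h3 := tnorm_add_le (hbE.mul (hbE.sub hcE)) ((hbE.sub hcE).mul hcE)
      have h4 := tnorm_nonneg (I := I) (τ := τ) (sqIter a (k+1) - sqIter a k)
      have h5 : (0:ℝ) < (1/2:ℝ)^k := by positivity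
      have e1 : tnorm I τ (sqIter a (k+1)) * tnorm I τ (sqIter a (k+1) - sqIter a k)
          ≤ (1/2) * ((1/3) * (1/2)^k) :=
        mul_le_mul hb hΔ' h4 (by norm_num)
      have e2 : tnorm I τ (sqIter a (k+1) - sqIter a k) * tnorm I τ (sqIter a k)
          ≤ ((1/3) * (1/2)^k) * (1/2) :=
        mul_le_mul hΔ' hc (tnorm_nonneg _) (by positivity)
      rw [pow_succ]
      linarith

lemma sqIter_tel {a : Op H} (haE : memE I τ a) (hat : tnorm I τ a ≤ 2/3) (k : ℕ) :
    ∀ l, tnorm I τ (sqIter a (k+l) - sqIter a k) ≤ (2/3) * (1/2)^k * (1 - (1/2)^l)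
  | 0 => by simp [tnorm_zero]
  | (l+1) => by
      have h1 := sqIter_tel haE hat k l
      have h2 := sqIter_diff_tnorm haE hat (k+l)
      have hE1 : memE I τ (sqIter a (k+l+1) - sqIter a (k+l)) :=
        (sqIter_memE haE _).sub (sqIter_memE haE _)
      have hE2 : memE I τ (sqIter a (k+l) - sqIter a k) :=
        (sqIter_memE haE _).sub (sqIter_memE haE _)
      have hsplit : sqIter a (k+(l+1)) - sqIter a k
          = (sqIter a (k+l+1) - sqIter a (k+l)) + (sqIter a (k+l) - sqIter a k) := by
        have : k + (l+1) = k + l + 1 := by ring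
        rw [this]; abel
      rw [hsplit]
      have h3 := tnorm_add_le hE1 hE2
      have hpow : (1/2:ℝ)^(k+l) = (1/2)^k * (1/2)^l := pow_add _ _ _
      calc tnorm I τ _ ≤ tnorm I τ (sqIter a (k+l+1) - sqIter a (k+l))
            + tnorm I τ (sqIter a (k+l) - sqIter a k) := h3
        _ ≤ (1/3) * (1/2)^(k+l) + (2/3) * (1/2)^k * (1 - (1/2)^l) := add_le_add h2 h1
        _ ≤ (2/3) * (1/2)^k * (1 - (1/2)^(l+1)) := by
            rw [hpow]; ring_nf; nlinarith [pow_pos (by norm_num : (0:ℝ) < 1/2) k,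
              pow_pos (by norm_num : (0:ℝ) < 1/2) l]

lemma sqIter_cauchy_tnorm {a : Op H} (haE : memE I τ a) (hat : tnorm I τ a ≤ 2/3)
    {k m : ℕ} (hkm : k ≤ m) :
    tnorm I τ (sqIter a m - sqIter a k) ≤ (2/3) * (1/2)^k := by
  obtain ⟨l, rfl⟩ := Nat.exists_eq_add_of_le hkm
  have h1 := sqIter_tel haE hat k l
  have h2 : (0:ℝ) ≤ (1/2)^l := by positivity
  have h3 : (0:ℝ) < (1/2)^k := by positivity
  nlinarith

lemma sqIter_comm_succ (a X : Op H) (k : ℕ) :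
    sqIter a (k+1) * X - X * sqIter a (k+1)
      = (2⁻¹ : ℂ) • ((a * X - X * a)
        + (sqIter a k * (sqIter a k * X - X * sqIter a k)
          + (sqIter a k * X - X * sqIter a k) * sqIter a k)) := by
  rw [sqIter_succ, smul_mul_assoc, mul_smul_comm, ← smul_sub]
  congr 1
  noncomm_ring

lemma sqIter_fix_eq (a y : Op H) (h : y = (2⁻¹ : ℂ) • (a + y * y)) :
    a + y * y = (2 : ℂ) • y := by
  conv_rhs => rw [h]
  rw [smul_smul]
  norm_num

end IterSec
section MainSec

variable {H : Type} [NormedAddCommGroup H] [InnerProductSpace ℂ H] [CompleteSpace H]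
variable {n : ℕ} {I : SymmNormedIdeal H} {τ : Fin n → Op H}

lemma tnorm_neg (X : Op H) : tnorm I τ (-X) = tnorm I τ X := by
  rw [show -X = (-1 : ℂ) • X by simp, tnorm_smul]
  simp

lemma nrm_sub_symm (X Y : Op H) : I.nrm (X - Y) = I.nrm (Y - X) := by
  rw [show X - Y = (-1 : ℂ) • (Y - X) by simp, I.nrm_smul']
  simp

lemma norm_two_thirds : ‖(2/3 : ℂ)‖ = 2/3 := by
  rw [show (2/3 : ℂ) = ((2/3 : ℝ) : ℂ) by norm_num, Complex.norm_real]
  norm_num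

set_option maxHeartbeats 3200000 in
theorem sqrt_main {G : Op H} (hGsa : IsSelfAdjoint G) (hGE : memE I τ G)
    (hGnorm : tnorm I τ (G - (3/2 : ℂ) • (1 : Op H)) ≤ 1) :
    ∃ S : Op H, S.IsPositive ∧ S * S = G ∧ memE I τ S ∧
      commNrm I τ S ≤ commNrm I τ G ∧
      ∀ X : Op H, memE I τ X → tnorm I τ (S * X - X * S) ≤ tnorm I τ (G * X - X * G) := by
  set a : Op H := 1 - (2/3 : ℂ) • G with ha_def
  have haE : memE I τ a := by
    rw [ha_def]; exact memE.one.sub (memE.smul _ hGE)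
  have haSA : IsSelfAdjoint a := by
    rw [ha_def, IsSelfAdjoint, star_sub, star_one, star_smul, hGsa.star_eq]
    norm_num
  have hat : tnorm I τ a ≤ 2/3 := by
    have key : a = (-(2/3) : ℂ) • (G - (3/2 : ℂ) • (1 : Op H)) := by
      rw [ha_def, smul_sub, smul_smul]
      norm_num
      abel
    rw [key, tnorm_smul, norm_neg, norm_two_thirds]
    nlinarith [tnorm_nonneg (I := I) (τ := τ) (G - (3/2:ℂ) • (1 : Op H))]
  clear_value a
  -- Cauchy sequence and limit
  have hdist : ∀ k, dist (sqIter a k) (sqIter a (k+1)) ≤ (1/3) * (1/2) ^ k := by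
    intro k
    rw [dist_eq_norm, norm_sub_rev]
    exact (norm_le_tnorm _).trans (sqIter_diff_tnorm haE hat k)
  obtain ⟨y, hy⟩ := cauchySeq_tendsto_of_complete
    (cauchySeq_of_le_geometric (1/2) (1/3) (by norm_num) hdist)
  have hpowlim : Tendsto (fun k : ℕ => ((1:ℝ)/2) ^ k) atTop (𝓝 0) :=
    tendsto_pow_atTop_nhds_zero_of_lt_one (by norm_num) (by norm_num)
  -- fixed point equation
  have hshift : Tendsto (fun k => sqIter a (k+1)) atTop (𝓝 y) :=
    hy.comp (tendsto_add_atTop_nat 1)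
  have hfix : y = (2⁻¹ : ℂ) • (a + y * y) := by
    refine tendsto_nhds_unique hshift ?_
    have : Tendsto (fun k => (2⁻¹ : ℂ) • (a + sqIter a k * sqIter a k)) atTop
        (𝓝 ((2⁻¹ : ℂ) • (a + y * y))) :=
      ((tendsto_const_nhds.add (hy.mul hy)).const_smul _)
    simpa [sqIter_succ] using this
  -- self-adjointness of y
  have hysa : IsSelfAdjoint y := by
    have h1 : Tendsto (fun k => star (sqIter a k)) atTop (𝓝 (star y)) := hy.star
    have h2 : (fun k => star (sqIter a k)) = sqIter a := by
      funext k; exact (sqIter_sa haSA k).star_eq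
    rw [h2] at h1
    exact (tendsto_nhds_unique h1 hy)
  -- operator norm tail bound
  have hoptail : ∀ k, ‖y - sqIter a k‖ ≤ (2/3) * (1/2) ^ k := by
    intro k
    have hlim : Tendsto (fun m => ‖sqIter a m - sqIter a k‖) atTop (𝓝 ‖y - sqIter a k‖) :=
      ((hy.sub tendsto_const_nhds).norm)
    refine le_of_tendsto hlim ?_
    filter_upwards [eventually_ge_atTop k] with m hm
    exact (norm_le_tnorm _).trans (sqIter_cauchy_tnorm haE hat hm)
  have hynorm : ‖y‖ ≤ 1/2 := by
    refine le_of_tendsto hy.norm ?_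
    filter_upwards with k
    exact (norm_le_tnorm _).trans (sqIter_tnorm haE hat k)
  -- ideal-norm limits of commutators
  have hYj : ∀ j, (y * τ j - τ j * y) ∈ I.carrier ∧
      ∀ k, I.nrm ((y - sqIter a k) * τ j - τ j * (y - sqIter a k)) ≤ (2/3) * (1/2) ^ k := by
    intro j
    have hfc : ∀ k, (sqIter a k * τ j - τ j * sqIter a k) ∈ I.carrier :=
      fun k => sqIter_memE haE k j
    have hdiff : ∀ k m, k ≤ m →
        I.nrm ((sqIter a m * τ j - τ j * sqIter a m) - (sqIter a k * τ j - τ j * sqIter a k))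
          ≤ (2/3) * (1/2) ^ k := by
      intro k m hkm
      have hre : (sqIter a m * τ j - τ j * sqIter a m) - (sqIter a k * τ j - τ j * sqIter a k)
          = (sqIter a m - sqIter a k) * τ j - τ j * (sqIter a m - sqIter a k) := by
        noncomm_ring
      rw [hre]
      exact (nrm_le_commNrm _ j).trans ((commNrm_le_tnorm _).trans
        (sqIter_cauchy_tnorm haE hat hkm))
    have hCauchy : ∀ ε : ℝ, 0 < ε → ∃ N, ∀ m ≥ N, ∀ k ≥ N,
        I.nrm ((sqIter a m * τ j - τ j * sqIter a m) - (sqIter a k * τ j - τ j * sqIter a k))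
          < ε := by
      intro ε hε
      obtain ⟨N, hN⟩ := exists_pow_lt_of_lt_one (show (0:ℝ) < (3/2) * ε by linarith)
        (show (1/2 : ℝ) < 1 by norm_num)
      refine ⟨N, fun m hm k hk => ?_⟩
      have hkey : ∀ p q : ℕ, N ≤ p → p ≤ q →
          I.nrm ((sqIter a q * τ j - τ j * sqIter a q) - (sqIter a p * τ j - τ j * sqIter a p))
            < ε := by
        intro p q hNp hpq
        refine lt_of_le_of_lt (hdiff p q hpq) ?_
        have : ((1:ℝ)/2) ^ p ≤ (1/2) ^ N :=
          pow_le_pow_of_le_one (by norm_num) (by norm_num) hNp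
        nlinarith
      rcases le_total k m with h | h
      · exact hkey k m hk h
      · rw [nrm_sub_symm]; exact hkey m k hm h
    obtain ⟨Yj, hYjc, hYjlim⟩ := I.complete' _ hfc hCauchy
    have hflim : Tendsto (fun k => sqIter a k * τ j - τ j * sqIter a k) atTop
        (𝓝 (y * τ j - τ j * y)) :=
      ((hy.mul tendsto_const_nhds).sub (tendsto_const_nhds.mul hy))
    have hflim2 : Tendsto (fun k => sqIter a k * τ j - τ j * sqIter a k) atTop (𝓝 Yj) := by
      rw [tendsto_iff_norm_sub_tendsto_zero]
      refine squeeze_zero (fun k => norm_nonneg _)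
        (fun k => I.opNorm_le_nrm' _ (I.sub_mem (hfc k) hYjc)) hYjlim
    have hYjeq : Yj = y * τ j - τ j * y := tendsto_nhds_unique hflim2 hflim
    constructor
    · exact hYjeq ▸ hYjc
    · intro k
      have hre : (y - sqIter a k) * τ j - τ j * (y - sqIter a k)
          = Yj - (sqIter a k * τ j - τ j * sqIter a k) := by
        rw [hYjeq]; noncomm_ring
      rw [hre]
      have hnlim : Tendsto (fun m => I.nrm (Yj - (sqIter a m * τ j - τ j * sqIter a m))
          + (2/3) * (1/2:ℝ) ^ k) atTop (𝓝 (0 + (2/3) * (1/2) ^ k)) := by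
        refine Tendsto.add_const _ ?_
        have : (fun m => I.nrm (Yj - (sqIter a m * τ j - τ j * sqIter a m)))
            = fun m => I.nrm ((sqIter a m * τ j - τ j * sqIter a m) - Yj) := by
          funext m; exact nrm_sub_symm _ _
        rw [this]; exact hYjlim
      have hfin : I.nrm (Yj - (sqIter a k * τ j - τ j * sqIter a k))
          ≤ 0 + (2/3) * (1/2) ^ k := by
        refine ge_of_tendsto hnlim ?_
        filter_upwards [eventually_ge_atTop k] with m hm
        have hsplit : Yj - (sqIter a k * τ j - τ j * sqIter a k)
            = (Yj - (sqIter a m * τ j - τ j * sqIter a m))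
              + ((sqIter a m * τ j - τ j * sqIter a m)
                - (sqIter a k * τ j - τ j * sqIter a k)) := by abel
        calc I.nrm (Yj - (sqIter a k * τ j - τ j * sqIter a k))
            ≤ I.nrm (Yj - (sqIter a m * τ j - τ j * sqIter a m))
              + I.nrm ((sqIter a m * τ j - τ j * sqIter a m)
                - (sqIter a k * τ j - τ j * sqIter a k)) := by
              rw [hsplit]
              exact I.nrm_add_le' _ (I.sub_mem hYjc (hfc m)) _ (I.sub_mem (hfc m) (hfc k))
          _ ≤ I.nrm (Yj - (sqIter a m * τ j - τ j * sqIter a m)) + (2/3) * (1/2) ^ k := by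
              linarith [hdiff k m hm]
      linarith [hfin]
  have hyE : memE I τ y := fun j => (hYj j).1
  have hcommtail : ∀ k, commNrm I τ (y - sqIter a k) ≤ (2/3) * (1/2) ^ k := by
    intro k
    exact commNrm_le (by positivity) (fun j => (hYj j).2 k)
  have httail : ∀ k, tnorm I τ (y - sqIter a k) ≤ (4/3) * (1/2) ^ k := by
    intro k
    have h1 := hoptail k
    have h2 := hcommtail k
    unfold tnorm; linarith
  -- commNrm y ≤ commNrm a
  have hka : ∀ k, commNrm I τ (sqIter a k) ≤ commNrm I τ a := by
    intro k
    induction k with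
    | zero => rw [sqIter_zero, commNrm_zero]; exact commNrm_nonneg a
    | succ k ih =>
      have hkE := sqIter_memE (I := I) (τ := τ) haE k
      have hknorm : ‖sqIter a k‖ ≤ 1/2 :=
        (norm_le_tnorm _).trans (sqIter_tnorm haE hat k)
      have h1 := commNrm_mul_le hkE hkE
      have h2 := commNrm_add_le haE (hkE.mul hkE)
      have h3 := commNrm_nonneg (I := I) (τ := τ) (sqIter a k)
      rw [sqIter_succ, commNrm_smul, norm_two_inv]
      nlinarith [commNrm_nonneg (I := I) (τ := τ) (a + sqIter a k * sqIter a k),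
        commNrm_nonneg (I := I) (τ := τ) a]
  have hcay : commNrm I τ y ≤ commNrm I τ a := by
    have hnlim : Tendsto (fun k : ℕ => (2/3) * (1/2:ℝ) ^ k + commNrm I τ a) atTop
        (𝓝 (2/3 * 0 + commNrm I τ a)) :=
      Tendsto.add_const _ (hpowlim.const_mul _)
    have hfin : commNrm I τ y ≤ 2/3 * 0 + commNrm I τ a := by
      refine ge_of_tendsto hnlim ?_
      filter_upwards with k
      have hsplit : y = (y - sqIter a k) + sqIter a k := by abel
      calc commNrm I τ y ≤ commNrm I τ (y - sqIter a k) + commNrm I τ (sqIter a k) := by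
            nth_rewrite 1 [hsplit]
            exact commNrm_add_le (hyE.sub (sqIter_memE haE k)) (sqIter_memE haE k)
        _ ≤ (2/3) * (1/2) ^ k + commNrm I τ a := add_le_add (hcommtail k) (hka k)
    linarith [hfin]
  have hcaG : commNrm I τ a ≤ (2/3) * commNrm I τ G := by
    have h1 := commNrm_sub_le (memE.one (I := I) (τ := τ)) (memE.smul (2/3 : ℂ) hGE)
    rw [commNrm_one, commNrm_smul, norm_two_thirds] at h1
    rw [ha_def]; linarith
  -- the square root
  set c₀ : ℝ := Real.sqrt (3/2) with hc₀
  have hc₀nn : 0 ≤ c₀ := Real.sqrt_nonneg _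
  have hc₀sq : c₀ * c₀ = 3/2 := Real.mul_self_sqrt (by norm_num)
  clear_value c₀
  have hc₀le : c₀ ≤ 3/2 := by nlinarith
  set S : Op H := ((c₀ : ℂ)) • ((1 : Op H) - y) with hS_def
  clear_value S
  have hSE : memE I τ S := by
    rw [hS_def]; exact memE.smul _ (memE.one.sub hyE)
  have hSsq : S * S = G := by
    have h2y : a + y * y = (2 : ℂ) • y := sqIter_fix_eq a y hfix
    have hone : ((1 : Op H) - y) * ((1 : Op H) - y) = (2/3 : ℂ) • G := by
      have e : ((1 : Op H) - y) * ((1 : Op H) - y) = 1 - (2:ℂ) • y + y * y := by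
        rw [two_smul]; noncomm_ring
      rw [e, ← h2y, ha_def]
      abel
    have hcc : ((c₀ : ℂ)) * (c₀ : ℂ) = (3/2 : ℂ) := by
      rw [← Complex.ofReal_mul, hc₀sq]
      norm_num
    rw [hS_def, smul_mul_assoc, mul_smul_comm, smul_smul, hone, smul_smul, hcc]
    rw [show (3/2 : ℂ) * (2/3 : ℂ) = 1 by norm_num, one_smul]
  have hSsa : IsSelfAdjoint S := by
    rw [hS_def, IsSelfAdjoint, star_smul, star_sub, star_one, hysa.star_eq, Complex.star_def,
      Complex.conj_ofReal]
  have hSpos : S.IsPositive := by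
    refine ⟨hSsa.isSymmetric, fun x => ?_⟩
    have hSx : S x = (c₀ : ℂ) • (x - y x) := by
      rw [hS_def]
      simp
    rw [ContinuousLinearMap.reApplyInnerSelf_apply, hSx, inner_smul_left, Complex.conj_ofReal]
    simp only [RCLike.re_to_complex]
    have hre : (((c₀ : ℂ)) * (inner ℂ (x - y x) x)).re
        = c₀ * ((inner ℂ (x - y x) x)).re := by
      simp [Complex.mul_re]
    rw [hre]
    have h1 : ((inner ℂ (x - y x) x)).re = ((inner ℂ x x)).re - ((inner ℂ (y x) x)).re := by
      rw [inner_sub_left]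
      simp
    have h2 : ((inner ℂ x x)).re = ‖x‖ * ‖x‖ := by
      simpa using inner_self_eq_norm_mul_norm (𝕜 := ℂ) x
    have h3 : ((inner ℂ (y x) x)).re ≤ ‖y x‖ * ‖x‖ := by
      have := (RCLike.re_le_norm ((inner ℂ (y x) x))).trans
        (norm_inner_le_norm (𝕜 := ℂ) (y x) x)
      simpa using this
    have h4 : ‖y x‖ ≤ ‖y‖ * ‖x‖ := y.le_opNorm x
    have h6 : (0:ℝ) ≤ ‖x‖ := norm_nonneg x
    have h5 : ‖y‖ * ‖x‖ ≤ (1/2) * ‖x‖ := mul_le_mul_of_nonneg_right hynorm h6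
    have h5' : ‖y x‖ * ‖x‖ ≤ ((1/2) * ‖x‖) * ‖x‖ :=
      mul_le_mul_of_nonneg_right (h4.trans h5) h6
    have hre0 : 0 ≤ ((inner ℂ (x - y x) x)).re := by
      rw [h1, h2]
      linarith [h3, h5', mul_nonneg h6 h6]
    exact mul_nonneg hc₀nn hre0
  have hnormc₀ : ‖((c₀ : ℝ) : ℂ)‖ = c₀ := by
    rw [Complex.norm_real, Real.norm_eq_abs, abs_of_nonneg hc₀nn]
  have hScomm : commNrm I τ S ≤ commNrm I τ G := by
    have h1 : commNrm I τ ((1 : Op H) - y) ≤ commNrm I τ y := by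
      have := commNrm_sub_le (memE.one (I := I) (τ := τ)) hyE
      rw [commNrm_one] at this
      linarith
    rw [hS_def, commNrm_smul, hnormc₀]
    have h2 : commNrm I τ y ≤ (2/3) * commNrm I τ G := hcay.trans hcaG
    have h3 := commNrm_nonneg (I := I) (τ := τ) G
    calc c₀ * commNrm I τ ((1:Op H) - y) ≤ c₀ * ((2/3) * commNrm I τ G) :=
          mul_le_mul_of_nonneg_left (h1.trans h2) hc₀nn
      _ ≤ (3/2) * ((2/3) * commNrm I τ G) :=
          mul_le_mul_of_nonneg_right hc₀le (mul_nonneg (by norm_num) h3)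
      _ = commNrm I τ G := by ring
  refine ⟨S, hSpos, hSsq, hSE, hScomm, ?_⟩
  -- the commutator estimate
  intro X hXE
  have hcomX : ∀ k, tnorm I τ (sqIter a k * X - X * sqIter a k)
      ≤ tnorm I τ (a * X - X * a) := by
    intro k
    induction k with
    | zero =>
      rw [sqIter_zero]
      simp only [zero_mul, mul_zero, sub_zero]
      rw [tnorm_zero]
      exact tnorm_nonneg _
    | succ k ih =>
      have hkE := sqIter_memE (I := I) (τ := τ) haE k
      have hkt : tnorm I τ (sqIter a k) ≤ 1/2 := sqIter_tnorm haE hat k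
      rw [sqIter_comm_succ a X k, tnorm_smul, norm_two_inv]
      have hcE : memE I τ (sqIter a k * X - X * sqIter a k) :=
        (hkE.mul hXE).sub (hXE.mul hkE)
      have h1 := tnorm_mul_le hkE hcE
      have h2 := tnorm_mul_le hcE hkE
      have h3 := tnorm_add_le (hkE.mul hcE) (hcE.mul hkE)
      have h4 := tnorm_add_le ((haE.mul hXE).sub (hXE.mul haE))
        ((hkE.mul hcE).add (hcE.mul hkE))
      have h5 := tnorm_nonneg (I := I) (τ := τ) (sqIter a k * X - X * sqIter a k)
      have h6 := tnorm_nonneg (I := I) (τ := τ) (a * X - X * a)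
      have hm1 : tnorm I τ (sqIter a k) * tnorm I τ (sqIter a k * X - X * sqIter a k)
          ≤ (1/2) * tnorm I τ (a * X - X * a) := mul_le_mul hkt ih h5 (by norm_num)
      have hm2 : tnorm I τ (sqIter a k * X - X * sqIter a k) * tnorm I τ (sqIter a k)
          ≤ tnorm I τ (a * X - X * a) * (1/2) :=
        mul_le_mul ih hkt (tnorm_nonneg _) h6
      linarith
  have hyX : tnorm I τ (y * X - X * y) ≤ tnorm I τ (a * X - X * a) := by
    have hnlim : Tendsto (fun k : ℕ => (8/3) * tnorm I τ X * (1/2:ℝ) ^ k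
        + tnorm I τ (a * X - X * a)) atTop (𝓝 ((8/3) * tnorm I τ X * 0
        + tnorm I τ (a * X - X * a))) :=
      Tendsto.add_const _ (hpowlim.const_mul _)
    have hfin : tnorm I τ (y * X - X * y)
        ≤ (8/3) * tnorm I τ X * 0 + tnorm I τ (a * X - X * a) := by
      refine ge_of_tendsto hnlim ?_
      filter_upwards with k
      have hdE : memE I τ (y - sqIter a k) := hyE.sub (sqIter_memE haE k)
      have hkE := sqIter_memE (I := I) (τ := τ) haE k
      have hsplit : y * X - X * y
          = ((y - sqIter a k) * X - X * (y - sqIter a k))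
            + (sqIter a k * X - X * sqIter a k) := by noncomm_ring
      have h1 := tnorm_add_le ((hdE.mul hXE).sub (hXE.mul hdE))
        ((hkE.mul hXE).sub (hXE.mul hkE))
      have h2 := tnorm_sub_le (hdE.mul hXE) (hXE.mul hdE)
      have h3 := tnorm_mul_le hdE hXE
      have h4 := tnorm_mul_le hXE hdE
      have h5 := httail k
      have h6 := hcomX k
      have h7 := tnorm_nonneg (I := I) (τ := τ) X
      have h8 := tnorm_nonneg (I := I) (τ := τ) (y - sqIter a k)
      have h9 : (0:ℝ) ≤ (1/2:ℝ)^k := by positivity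
      have hm1 : tnorm I τ (y - sqIter a k) * tnorm I τ X ≤ (4/3) * (1/2)^k * tnorm I τ X :=
        mul_le_mul_of_nonneg_right h5 h7
      have hm2 : tnorm I τ X * tnorm I τ (y - sqIter a k)
          ≤ tnorm I τ X * ((4/3) * (1/2)^k) := mul_le_mul_of_nonneg_left h5 h7
      calc tnorm I τ (y * X - X * y)
          = tnorm I τ (((y - sqIter a k) * X - X * (y - sqIter a k))
            + (sqIter a k * X - X * sqIter a k)) := by rw [hsplit]
        _ ≤ (8/3) * tnorm I τ X * (1/2) ^ k + tnorm I τ (a * X - X * a) := by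
            ring_nf
            ring_nf at hm1 hm2 h1 h2 h3 h4
            linarith
    linarith [hfin]
  have hSX : S * X - X * S = (-(c₀ : ℂ)) • (y * X - X * y) := by
    rw [hS_def, smul_mul_assoc, mul_smul_comm, ← smul_sub]
    rw [show (-(c₀:ℂ)) • (y * X - X * y) = ((c₀:ℂ)) • (-(y * X - X * y)) by
      rw [smul_neg, neg_smul]]
    congr 1
    noncomm_ring
  have haX : a * X - X * a = (-(2/3) : ℂ) • (G * X - X * G) := by
    rw [ha_def]
    rw [show (-(2/3) : ℂ) • (G * X - X * G) = ((2/3):ℂ) • (-(G * X - X * G)) by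
      rw [smul_neg, neg_smul]]
    rw [sub_mul, mul_sub, one_mul, mul_one, smul_mul_assoc, mul_smul_comm, smul_neg, smul_sub]
    abel
  rw [hSX, tnorm_smul, norm_neg, hnormc₀]
  rw [haX, tnorm_smul, norm_neg, norm_two_thirds] at hyX
  have h7 := tnorm_nonneg (I := I) (τ := τ) (G * X - X * G)
  calc c₀ * tnorm I τ (y * X - X * y) ≤ c₀ * (2/3 * tnorm I τ (G * X - X * G)) :=
        mul_le_mul_of_nonneg_left hyX hc₀nn
    _ ≤ (3/2) * (2/3 * tnorm I τ (G * X - X * G)) :=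
        mul_le_mul_of_nonneg_right hc₀le (mul_nonneg (by norm_num) h7)
    _ = tnorm I τ (G * X - X * G) := by ring

end MainSec
/-- Lemma 3.1: for hermitian `G ∈ E(τ;I)` with `|||G - (3/2)I||| ≤ 1`,
the (unique positive) square root `G^{1/2}` lies in `E(τ;I)`, and there is a universal
constant `C` with `|||[G^{1/2},X]||| ≤ C |||[G,X]|||` and `|[G^{1/2},τ]|_I ≤ C |[G,τ]|_I`. -/
theorem statement6 :
    ∃ C : ℝ, ∀ (H : Type) [NormedAddCommGroup H] [InnerProductSpace ℂ H] [CompleteSpace H]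
      [TopologicalSpace.SeparableSpace H], ¬ FiniteDimensional ℂ H →
      ∀ (n : ℕ) (τ : Fin n → Op H), (∀ j, IsSelfAdjoint (τ j)) →
      ∀ (I : SymmNormedIdeal H) (G : Op H), IsSelfAdjoint G → memE I τ G →
        tnorm I τ (G - (3/2 : ℂ) • (1 : Op H)) ≤ 1 →
        (∃ S : Op H, S.IsPositive ∧ S * S = G) ∧
        (∀ S : Op H, S.IsPositive → S * S = G →
          memE I τ S ∧ commNrm I τ S ≤ C * commNrm I τ G ∧
          ∀ X : Op H, memE I τ X →
            tnorm I τ (S * X - X * S) ≤ C * tnorm I τ (G * X - X * G)) := by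
  refine ⟨1, ?_⟩
  intro H _ _ _ _ _hinf n τ _hτ I G hGsa hGE hGnorm
  obtain ⟨S₀, hpos, hsq, hE, hcomm, hX⟩ := sqrt_main hGsa hGE hGnorm
  refine ⟨⟨S₀, hpos, hsq⟩, ?_⟩
  intro S hSpos hSsq
  have hSeq : S = S₀ := by
    have h1 := CFC.sqrt_unique (a := G) (b := S) hSsq
      ((ContinuousLinearMap.nonneg_iff_isPositive S).mpr hSpos)
    have h2 := CFC.sqrt_unique (a := G) (b := S₀) hsq
      ((ContinuousLinearMap.nonneg_iff_isPositive S₀).mpr hpos)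
    rw [← h1, ← h2]
  subst hSeq
  exact ⟨hE, by rw [one_mul]; exact hcomm, fun X hXE => by
    rw [one_mul]; exact hX X hXE⟩
end
end

section
/- Let (Q_s)_{s≥0} be a sequence of mutually orthogonal projections on H with Σ_{s≥0} Q_s = I (in the strong operator topology), and let X ∈ B(H) be block-tridiagonal with respect to this decomposition, i.e. Q_s X Q_t = 0 whenever |s − t| ≥ 2. For N ≥ 1 let B = Q_0 + Σ_{1≤s≤N} (1 − (s−1)/N) Q_s. Then ‖[B, X]‖ ≤ 2 N^{-1} ‖X‖. -/
noncomputable section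

open Filter Topology
open scoped ComplexInnerProductSpace

variable {H : Type} [NormedAddCommGroup H] [InnerProductSpace ℂ H] [CompleteSpace H]

variable {n : ℕ}

section Helpers
variable (Q : ℕ → H →L[ℂ] H)

lemma sa_inner (P : H →L[ℂ] H) (hs : IsSelfAdjoint P) (x y : H) : ⟪P x, y⟫ = ⟪x, P y⟫ := by
  rw [← ContinuousLinearMap.adjoint_inner_left, hs.adjoint_eq]

lemma mul_apply' (A B : H →L[ℂ] H) (x : H) : A (B x) = (A * B) x := rfl

lemma proj_norm_le (P : H →L[ℂ] H) (hs : IsSelfAdjoint P) (hi : P * P = P) (ξ : H) :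
    ‖P ξ‖ ≤ ‖ξ‖ := by
  have h1 : ⟪P ξ, P ξ⟫ = ⟪ξ, P ξ⟫ := by
    rw [sa_inner P hs, mul_apply', hi]
  have h2 : (‖P ξ‖ : ℝ)^2 = RCLike.re ⟪ξ, P ξ⟫ := by
    rw [← h1, inner_self_eq_norm_sq]
  have h3 := norm_inner_le_norm (𝕜 := ℂ) ξ (P ξ)
  have h5 := RCLike.re_le_norm (⟪ξ, P ξ⟫ : ℂ)
  nlinarith [norm_nonneg (P ξ), norm_nonneg ξ]

variable (Q : ℕ → H →L[ℂ] H)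

lemma bessel (hQsa : ∀ s, IsSelfAdjoint (Q s)) (hQidem : ∀ s, Q s * Q s = Q s)
    (hQorth : ∀ s t : ℕ, s ≠ t → Q s * Q t = 0) (S : Finset ℕ) (ξ : H) :
    ∑ t ∈ S, ‖Q t ξ‖^2 ≤ ‖ξ‖^2 := by
  set P : H →L[ℂ] H := ∑ t ∈ S, Q t with hP
  have hPsa : IsSelfAdjoint P := by
    rw [isSelfAdjoint_iff, hP, star_sum]
    exact Finset.sum_congr rfl fun t _ => hQsa t
  have hPi : P * P = P := by
    rw [hP, Finset.sum_mul_sum]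
    refine Finset.sum_congr rfl fun j hj => ?_
    rw [Finset.sum_eq_single j (fun k _ hk => hQorth j k (Ne.symm hk)) (fun h => absurd hj h),
      hQidem]
  have key : ∑ t ∈ S, ‖Q t ξ‖^2 = RCLike.re (⟪ξ, P ξ⟫ : ℂ) := by
    rw [hP, ContinuousLinearMap.sum_apply, inner_sum, map_sum]
    refine Finset.sum_congr rfl fun t _ => ?_
    have : (⟪ξ, Q t ξ⟫ : ℂ) = ⟪Q t ξ, Q t ξ⟫ := by
      rw [sa_inner (Q t) (hQsa t), mul_apply', hQidem]
    rw [this, inner_self_eq_norm_sq]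
  have h3 := norm_inner_le_norm (𝕜 := ℂ) ξ (P ξ)
  have h5 := RCLike.re_le_norm (⟪ξ, P ξ⟫ : ℂ)
  have h4 := proj_norm_le P hPsa hPi ξ
  nlinarith [norm_nonneg ξ, norm_nonneg (P ξ)]

lemma orth_sum_norm (hQsa : ∀ s, IsSelfAdjoint (Q s))
    (hQorth : ∀ s t : ℕ, s ≠ t → Q s * Q t = 0) (S : Finset ℕ) (v : ℕ → H)
    (f : ℕ → ℕ) (hf : ∀ j ∈ S, ∀ k ∈ S, j ≠ k → f j ≠ f k) :
    ‖∑ k ∈ S, Q (f k) (v k)‖^2 = ∑ k ∈ S, ‖Q (f k) (v k)‖^2 := by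
  have h1 : (⟪∑ k ∈ S, Q (f k) (v k), ∑ k ∈ S, Q (f k) (v k)⟫ : ℂ)
      = ∑ k ∈ S, ⟪Q (f k) (v k), Q (f k) (v k)⟫ := by
    rw [inner_sum]
    refine Finset.sum_congr rfl fun k hk => ?_
    rw [sum_inner, Finset.sum_eq_single k (fun j hj hjk => ?_) (fun h => absurd hk h)]
    rw [sa_inner (Q (f j)) (hQsa (f j)), mul_apply', hQorth (f j) (f k) (hf j hj k hk hjk)]
    simp
  calc ‖∑ k ∈ S, Q (f k) (v k)‖^2
      = RCLike.re (⟪∑ k ∈ S, Q (f k) (v k), ∑ k ∈ S, Q (f k) (v k)⟫ : ℂ) :=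
        (inner_self_eq_norm_sq _).symm
  _ = ∑ k ∈ S, RCLike.re (⟪Q (f k) (v k), Q (f k) (v k)⟫ : ℂ) := by rw [h1, map_sum]
  _ = ∑ k ∈ S, ‖Q (f k) (v k)‖^2 := Finset.sum_congr rfl fun k _ => inner_self_eq_norm_sq _

lemma ext_zero_right (hQsum : ∀ h : H, Tendsto (fun M => (∑ s ∈ Finset.range M, Q s) h) atTop (nhds h))
    (A : H →L[ℂ] H) (h : ∀ t, A * Q t = 0) : A = 0 := by
  ext ξ
  have h1 : Tendsto (fun M => A ((∑ s ∈ Finset.range M, Q s) ξ)) atTop (nhds (A ξ)) :=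
    (A.continuous.tendsto ξ).comp (hQsum ξ)
  have h2 : ∀ M, A ((∑ s ∈ Finset.range M, Q s) ξ) = 0 := by
    intro M
    rw [ContinuousLinearMap.sum_apply, map_sum]
    refine Finset.sum_eq_zero fun t _ => ?_
    rw [mul_apply' A (Q t), h t]; rfl
  simp only [h2] at h1
  simpa using tendsto_nhds_unique h1 tendsto_const_nhds

lemma ext_zero_left (hQsum : ∀ h : H, Tendsto (fun M => (∑ s ∈ Finset.range M, Q s) h) atTop (nhds h))
    (A : H →L[ℂ] H) (h : ∀ s, Q s * A = 0) : A = 0 := by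
  ext ξ
  have h1 : Tendsto (fun M => (∑ s ∈ Finset.range M, Q s) (A ξ)) atTop (nhds (A ξ)) := hQsum (A ξ)
  have h2 : ∀ M, (∑ s ∈ Finset.range M, Q s) (A ξ) = 0 := by
    intro M
    rw [ContinuousLinearMap.sum_apply]
    refine Finset.sum_eq_zero fun s _ => ?_
    rw [mul_apply' (Q s) A, h s]; rfl
  simp only [h2] at h1
  simpa using tendsto_nhds_unique h1 tendsto_const_nhds

lemma offdiag_bound (hQsa : ∀ s, IsSelfAdjoint (Q s)) (hQidem : ∀ s, Q s * Q s = Q s)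
    (hQorth : ∀ s t : ℕ, s ≠ t → Q s * Q t = 0) (X : H →L[ℂ] H) (S : Finset ℕ)
    (f g : ℕ → ℕ) (hf : ∀ j ∈ S, ∀ k ∈ S, j ≠ k → f j ≠ f k)
    (hg : ∀ j ∈ S, ∀ k ∈ S, g j = g k → j = k) :
    ‖∑ k ∈ S, Q (f k) * X * Q (g k)‖ ≤ ‖X‖ := by
  refine ContinuousLinearMap.opNorm_le_bound _ (norm_nonneg X) fun ξ => ?_
  have happ : (∑ k ∈ S, Q (f k) * X * Q (g k)) ξ = ∑ k ∈ S, Q (f k) ((X * Q (g k)) ξ) := by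
    rw [ContinuousLinearMap.sum_apply]
    exact Finset.sum_congr rfl fun k _ => by rw [mul_assoc]; rfl
  rw [happ]
  have h1 := orth_sum_norm Q hQsa hQorth S (fun k => (X * Q (g k)) ξ) f hf
  have h2 : ∀ k ∈ S, ‖Q (f k) ((X * Q (g k)) ξ)‖^2 ≤ ‖X‖^2 * ‖Q (g k) ξ‖^2 := by
    intro k _
    have a1 : ‖Q (f k) ((X * Q (g k)) ξ)‖ ≤ ‖X‖ * ‖Q (g k) ξ‖ :=
      calc ‖Q (f k) ((X * Q (g k)) ξ)‖ ≤ ‖(X * Q (g k)) ξ‖ :=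
            proj_norm_le _ (hQsa _) (hQidem _) _
      _ = ‖X (Q (g k) ξ)‖ := rfl
      _ ≤ ‖X‖ * ‖Q (g k) ξ‖ := X.le_opNorm _
    nlinarith [norm_nonneg (Q (f k) ((X * Q (g k)) ξ))]
  have h3 : ∑ k ∈ S, ‖Q (g k) ξ‖^2 ≤ ‖ξ‖^2 := by
    calc ∑ k ∈ S, ‖Q (g k) ξ‖^2 = ∑ t ∈ S.image g, ‖Q t ξ‖^2 :=
          (Finset.sum_image (f := fun t => ‖Q t ξ‖^2) (fun x hx y hy h => hg x hx y hy h)).symm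
    _ ≤ ‖ξ‖^2 := bessel Q hQsa hQidem hQorth _ ξ
  have h4 : ‖∑ k ∈ S, Q (f k) ((X * Q (g k)) ξ)‖^2 ≤ (‖X‖ * ‖ξ‖)^2 := by
    rw [h1]
    calc ∑ k ∈ S, ‖Q (f k) ((X * Q (g k)) ξ)‖^2
        ≤ ∑ k ∈ S, ‖X‖^2 * ‖Q (g k) ξ‖^2 := Finset.sum_le_sum h2
    _ = ‖X‖^2 * ∑ k ∈ S, ‖Q (g k) ξ‖^2 := by rw [Finset.mul_sum]
    _ ≤ ‖X‖^2 * ‖ξ‖^2 := by nlinarith [sq_nonneg ‖X‖]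
    _ = (‖X‖ * ‖ξ‖)^2 := by ring
  nlinarith [norm_nonneg (∑ k ∈ S, Q (f k) ((X * Q (g k)) ξ)),
    mul_nonneg (norm_nonneg X) (norm_nonneg ξ)]

lemma sandwich (Q : ℕ → H →L[ℂ] H) (X : H →L[ℂ] H) (s a b t : ℕ) :
    Q s * (Q a * X * Q b) * Q t = (Q s * Q a) * X * (Q b * Q t) := by
  simp only [mul_assoc]


end Helpers

/-- the tridiagonal averaging estimate. -/
theorem statement15 {H : Type} [NormedAddCommGroup H] [InnerProductSpace ℂ H]
    [CompleteSpace H] [TopologicalSpace.SeparableSpace H]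
    (hinf : ¬ FiniteDimensional ℂ H)
    (Q : ℕ → Op H)
    (hQsa : ∀ s, IsSelfAdjoint (Q s)) (hQidem : ∀ s, Q s * Q s = Q s)
    (hQorth : ∀ s t : ℕ, s ≠ t → Q s * Q t = 0)
    (hQsum : ∀ h : H, Tendsto (fun N => (∑ s ∈ Finset.range N, Q s) h) atTop (nhds h))
    (X : Op H)
    (hX : ∀ s t : ℕ, (s + 2 ≤ t ∨ t + 2 ≤ s) → Q s * X * Q t = 0)
    (N : ℕ) (hN : 1 ≤ N) :
    ‖(Q 0 + ∑ s ∈ Finset.Icc 1 N, ((1 - ((s : ℝ) - 1) / N : ℝ) : ℂ) • Q s) * X -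
        X * (Q 0 + ∑ s ∈ Finset.Icc 1 N, ((1 - ((s : ℝ) - 1) / N : ℝ) : ℂ) • Q s)‖ ≤
      2 / N * ‖X‖ := by
  
  have hN0 : (N:ℝ) ≠ 0 := Nat.cast_ne_zero.mpr (by omega)
  set c : ℕ → ℝ := fun s => if s = 0 then 1 else if s ≤ N then 1 - ((s:ℝ)-1)/N else 0 with hc
  have cdef : ∀ s : ℕ, c s = if s = 0 then 1 else if s ≤ N then 1 - ((s:ℝ)-1)/N else 0 :=
    fun s => rfl
  set B : H →L[ℂ] H :=
    Q 0 + ∑ s ∈ Finset.Icc 1 N, ((1 - ((s : ℝ) - 1) / N : ℝ) : ℂ) • Q s with hB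
  have hBsum : B = Q 0 + ∑ s ∈ Finset.Icc 1 N, ((c s : ℝ) : ℂ) • Q s := by
    rw [hB]
    congr 1
    refine Finset.sum_congr rfl fun s hs => ?_
    obtain ⟨h1, h2⟩ := Finset.mem_Icc.mp hs
    have : c s = 1 - ((s:ℝ)-1)/N := by rw [cdef s, if_neg (by omega), if_pos h2]
    rw [this]
  -- coefficient difference identity
  have hcd : ∀ s : ℕ, c s - c (s+1) = if s ∈ Finset.Icc 1 N then (N:ℝ)⁻¹ else 0 := by
    intro s
    rcases Nat.eq_zero_or_pos s with rfl | hs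
    · rw [cdef 0, if_pos rfl, cdef 1, if_neg (by omega), if_pos hN,
        if_neg (by simp : (0:ℕ) ∉ Finset.Icc 1 N)]
      norm_num
    · have hs0 : s ≠ 0 := hs.ne'
      by_cases h1 : s ≤ N
      · have hmem : s ∈ Finset.Icc 1 N := Finset.mem_Icc.mpr ⟨hs, h1⟩
        rw [cdef s, if_neg hs0, if_pos h1, if_pos hmem, cdef (s+1), if_neg (by omega)]
        by_cases h2 : s + 1 ≤ N
        · rw [if_pos h2]
          push_cast
          field_simp
          ring
        · have hsN : s = N := by omega
          rw [if_neg h2]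
          subst hsN
          field_simp
          ring
      · have hmem : s ∉ Finset.Icc 1 N := by
          simp only [Finset.mem_Icc]; omega
        rw [cdef s, if_neg hs0, if_neg h1, cdef (s+1), if_neg (by omega),
          if_neg (by omega : ¬ s + 1 ≤ N), if_neg hmem]
        norm_num
  -- Q s * B and B * Q t
  have hQB : ∀ s, Q s * B = ((c s : ℝ) : ℂ) • Q s := by
    intro s
    rw [hBsum, mul_add, Finset.mul_sum]
    rcases eq_or_ne s 0 with rfl | hs0
    · rw [hQidem 0, Finset.sum_eq_zero fun r hr => ?_]
      · rw [cdef 0, if_pos rfl]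
        simp
      · have : (0:ℕ) ≠ r := by
          have := (Finset.mem_Icc.mp hr).1; omega
        rw [mul_smul_comm, hQorth 0 r this, smul_zero]
    · rw [hQorth s 0 hs0]
      by_cases hsN : s ≤ N
      · have hmem : s ∈ Finset.Icc 1 N := Finset.mem_Icc.mpr ⟨by omega, hsN⟩
        rw [Finset.sum_eq_single s
          (fun r _ hr => by rw [mul_smul_comm, hQorth s r (Ne.symm hr), smul_zero])
          (fun h => absurd hmem h), mul_smul_comm, hQidem, zero_add]
      · rw [Finset.sum_eq_zero fun r hr => ?_]
        · rw [cdef s, if_neg hs0, if_neg hsN]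
          simp
        · have : s ≠ r := fun h => hsN (h ▸ (Finset.mem_Icc.mp hr).2)
          rw [mul_smul_comm, hQorth s r this, smul_zero]
  have hBQ : ∀ t, B * Q t = ((c t : ℝ) : ℂ) • Q t := by
    intro t
    rw [hBsum, add_mul, Finset.sum_mul]
    rcases eq_or_ne t 0 with rfl | ht0
    · rw [hQidem 0, Finset.sum_eq_zero fun r hr => ?_]
      · rw [cdef 0, if_pos rfl]
        simp
      · have : r ≠ 0 := by
          have := (Finset.mem_Icc.mp hr).1; omega
        rw [smul_mul_assoc, hQorth r 0 this, smul_zero]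
    · rw [hQorth 0 t (Ne.symm ht0)]
      by_cases htN : t ≤ N
      · have hmem : t ∈ Finset.Icc 1 N := Finset.mem_Icc.mpr ⟨by omega, htN⟩
        rw [Finset.sum_eq_single t
          (fun r _ hr => by rw [smul_mul_assoc, hQorth r t hr, smul_zero])
          (fun h => absurd hmem h), smul_mul_assoc, hQidem, zero_add]
      · rw [Finset.sum_eq_zero fun r hr => ?_]
        · rw [cdef t, if_neg ht0, if_neg htN]
          simp
        · have : r ≠ t := fun h => htN (h ▸ (Finset.mem_Icc.mp hr).2)
          rw [smul_mul_assoc, hQorth r t this, smul_zero]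
  set D : H →L[ℂ] H := ∑ k ∈ Finset.Icc 1 N, Q k * X * Q (k+1) with hD
  set D' : H →L[ℂ] H := ∑ k ∈ Finset.Icc 1 N, Q (k+1) * X * Q k with hD'
  have hQDQ : ∀ s t, Q s * D * Q t =
      if s ∈ Finset.Icc 1 N ∧ t = s + 1 then Q s * X * Q t else 0 := by
    intro s t
    rw [hD, Finset.mul_sum, Finset.sum_mul]
    by_cases hst : s ∈ Finset.Icc 1 N ∧ t = s + 1
    · obtain ⟨hs, rfl⟩ := hst
      rw [Finset.sum_eq_single s (fun k hk hks => ?_) (fun h => absurd hs h)]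
      · rw [if_pos ⟨hs, rfl⟩, sandwich, hQidem, hQidem]
      · rw [sandwich, hQorth s k (Ne.symm hks), zero_mul, zero_mul]
    · rw [if_neg hst, Finset.sum_eq_zero]
      intro k hk
      rw [sandwich]
      rcases eq_or_ne s k with rfl | hsk
      · have ht : s + 1 ≠ t := fun h => hst ⟨hk, h.symm⟩
        rw [hQorth (s+1) t ht, mul_zero]
      · rw [hQorth s k hsk, zero_mul, zero_mul]
  have hQD'Q : ∀ s t, Q s * D' * Q t =
      if t ∈ Finset.Icc 1 N ∧ s = t + 1 then Q s * X * Q t else 0 := by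
    intro s t
    rw [hD', Finset.mul_sum, Finset.sum_mul]
    by_cases hst : t ∈ Finset.Icc 1 N ∧ s = t + 1
    · obtain ⟨ht, rfl⟩ := hst
      rw [Finset.sum_eq_single t (fun k hk hkt => ?_) (fun h => absurd ht h)]
      · rw [if_pos ⟨ht, rfl⟩, sandwich, hQidem, hQidem]
      · rw [sandwich, hQorth k t hkt, mul_zero]
    · rw [if_neg hst, Finset.sum_eq_zero]
      intro k hk
      rw [sandwich]
      rcases eq_or_ne t k with rfl | htk
      · have hs : s ≠ t + 1 := fun h => hst ⟨hk, h⟩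
        rw [hQorth s (t+1) hs, zero_mul, zero_mul]
      · rw [hQorth k t (Ne.symm htk), mul_zero]
  -- the key blockwise identity
  have key : ∀ s t, Q s * (B * X - X * B) * Q t = Q s * ((N:ℂ)⁻¹ • (D - D')) * Q t := by
    intro s t
    have l1 : Q s * (B * X) * Q t = ((c s : ℝ) : ℂ) • (Q s * X * Q t) := by
      rw [← mul_assoc (Q s) B X, hQB s, smul_mul_assoc, smul_mul_assoc]
    have l2 : Q s * (X * B) * Q t = ((c t : ℝ) : ℂ) • (Q s * X * Q t) := by
      rw [← mul_assoc (Q s) X B, mul_assoc (Q s * X) B (Q t), hBQ t, mul_smul_comm]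
    have e1 : Q s * (B * X - X * B) * Q t
        = (((c s : ℝ) : ℂ) - ((c t : ℝ) : ℂ)) • (Q s * X * Q t) := by
      rw [mul_sub, sub_mul, l1, l2, sub_smul]
    have r1 : Q s * ((N:ℂ)⁻¹ • (D - D')) * Q t
        = (N:ℂ)⁻¹ • (Q s * D * Q t - Q s * D' * Q t) := by
      rw [mul_smul_comm, smul_mul_assoc, mul_sub, sub_mul]
    rw [e1, r1, hQDQ s t, hQD'Q s t]
    by_cases h1 : t = s + 1
    · subst h1
      rw [if_neg (fun h => by omega : ¬ (s + 1 ∈ Finset.Icc 1 N ∧ s = s + 1 + 1)), sub_zero]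
      by_cases hs : s ∈ Finset.Icc 1 N
      · rw [if_pos ⟨hs, rfl⟩]
        have := hcd s
        rw [if_pos hs] at this
        have hcast : ((c s : ℝ) : ℂ) - ((c (s+1) : ℝ) : ℂ) = (N:ℂ)⁻¹ := by
          rw [← Complex.ofReal_sub, this]
          push_cast
          ring
        rw [hcast]
      · rw [if_neg (fun h => hs h.1), smul_zero]
        have := hcd s
        rw [if_neg hs] at this
        have hcast : ((c s : ℝ) : ℂ) - ((c (s+1) : ℝ) : ℂ) = 0 := by
          rw [← Complex.ofReal_sub, this, Complex.ofReal_zero]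
        rw [hcast, zero_smul]
    · by_cases h2 : s = t + 1
      · subst h2
        rw [if_neg (fun h => by omega : ¬ (t + 1 ∈ Finset.Icc 1 N ∧ t = t + 1 + 1)), zero_sub]
        by_cases ht : t ∈ Finset.Icc 1 N
        · rw [if_pos ⟨ht, rfl⟩]
          have := hcd t
          rw [if_pos ht] at this
          have hcast : ((c (t+1) : ℝ) : ℂ) - ((c t : ℝ) : ℂ) = -(N:ℂ)⁻¹ := by
            rw [← Complex.ofReal_sub]
            have : c (t+1) - c t = -(N:ℝ)⁻¹ := by linarith [this]
            rw [this]
            push_cast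
            ring
          rw [hcast, smul_neg, neg_smul]
        · rw [if_neg (fun h => ht h.1), neg_zero, smul_zero]
          have := hcd t
          rw [if_neg ht] at this
          have hcast : ((c (t+1) : ℝ) : ℂ) - ((c t : ℝ) : ℂ) = 0 := by
            rw [← Complex.ofReal_sub]
            have : c (t+1) - c t = 0 := by linarith [this]
            rw [this, Complex.ofReal_zero]
          rw [hcast, zero_smul]
      · rw [if_neg (fun h => h1 h.2), if_neg (fun h => h2 h.2), sub_zero, smul_zero]
        rcases eq_or_ne s t with rfl | hst
        · rw [sub_self, zero_smul]
        · rw [hX s t (by omega), smul_zero]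
  -- assemble: B X - X B = N⁻¹ • (D - D')
  have main : B * X - X * B = (N:ℂ)⁻¹ • (D - D') := by
    have h0 : B * X - X * B - (N:ℂ)⁻¹ • (D - D') = 0 := by
      apply ext_zero_right Q hQsum
      intro t
      apply ext_zero_left Q hQsum
      intro s
      have expand : Q s * ((B * X - X * B - (N:ℂ)⁻¹ • (D - D')) * Q t)
          = Q s * (B * X - X * B) * Q t - Q s * ((N:ℂ)⁻¹ • (D - D')) * Q t := by
        rw [← mul_assoc, mul_sub, sub_mul]
      rw [expand, key s t, sub_self]
    calc B * X - X * B = (B * X - X * B - (N:ℂ)⁻¹ • (D - D')) + (N:ℂ)⁻¹ • (D - D') := by abel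
    _ = (N:ℂ)⁻¹ • (D - D') := by rw [h0, zero_add]
  rw [main, norm_smul]
  have hD1 : ‖D‖ ≤ ‖X‖ := by
    rw [hD]
    exact offdiag_bound Q hQsa hQidem hQorth X _ (fun k => k) (fun k => k + 1)
      (fun j _ k _ h => h) (fun j _ k _ h => by simpa using h)
  have hD2 : ‖D'‖ ≤ ‖X‖ := by
    rw [hD']
    exact offdiag_bound Q hQsa hQidem hQorth X _ (fun k => k + 1) (fun k => k)
      (fun j _ k _ h => by simpa using h) (fun j _ k _ h => h)
  have hnrm : ‖((N:ℂ))⁻¹‖ = (N:ℝ)⁻¹ := by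
    rw [norm_inv]
    norm_num
  rw [hnrm]
  have h5 : ‖D - D'‖ ≤ 2 * ‖X‖ := by
    calc ‖D - D'‖ ≤ ‖D‖ + ‖D'‖ := norm_sub_le _ _
    _ ≤ 2 * ‖X‖ := by linarith
  have hNpos : (0:ℝ) < (N:ℝ)⁻¹ := by positivity
  calc (N:ℝ)⁻¹ * ‖D - D'‖ ≤ (N:ℝ)⁻¹ * (2 * ‖X‖) := by nlinarith
  _ = 2 / N * ‖X‖ := by ring
end
end

section
/- Let (R_k)_{k≥1} be positive operators on H with Σ_{k≥1} R_k² ≤ I (the partial sums increasing), and let (C_k)_{k≥1} be operators with ‖C_k‖ ≤ 1 for all k. Then the series Σ_{k≥1} R_k C_k R_k converges in the weak operator topology to an operator Y with ‖Y‖ ≤ 1. -/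
noncomputable section

open Filter Topology

variable {H : Type} [NormedAddCommGroup H] [InnerProductSpace ℂ H] [CompleteSpace H]

variable {n : ℕ}

/-- the glueing estimate. -/
theorem statement16 {H : Type} [NormedAddCommGroup H] [InnerProductSpace ℂ H]
    [CompleteSpace H] [TopologicalSpace.SeparableSpace H]
    (hinf : ¬ FiniteDimensional ℂ H)
    (R C : ℕ → Op H)
    (hR : ∀ k, (R k).IsPositive)
    (hsum : ∀ N : ℕ, ((1 : Op H) - ∑ k ∈ Finset.range N, R k ^ 2).IsPositive)
    (hC : ∀ k, ‖C k‖ ≤ 1) :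
    ∃ Y : Op H, ‖Y‖ ≤ 1 ∧ ∀ x y : H,
      Tendsto (fun N => (inner ℂ ((∑ k ∈ Finset.range N, R k * C k * R k) x) y : ℂ))
        atTop (nhds (inner ℂ (Y x) y : ℂ)) := by
  classical
  set T : ℕ → Op H := fun k => R k * C k * R k with hT
  -- bound on sums of squares over arbitrary finsets
  have hsq : ∀ (x : H) (s : Finset ℕ), ∑ k ∈ s, ‖R k x‖ ^ 2 ≤ ‖x‖ ^ 2 := by
    intro x s
    obtain ⟨N, hN⟩ : ∃ N, s ⊆ Finset.range N :=
      ⟨s.sup id + 1, fun k hk => Finset.mem_range.2 (Nat.lt_succ_of_le (Finset.le_sup (f := id) hk))⟩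
    have key : ∀ k, (inner ℂ ((R k ^ 2) x) x : ℂ) = inner ℂ (R k x) (R k x) := by
      intro k
      rw [sq, ContinuousLinearMap.mul_apply]
      exact (hR k).1 (R k x) x
    have h2 : RCLike.re (inner ℂ ((∑ k ∈ Finset.range N, R k ^ 2) x) x : ℂ)
        = ∑ k ∈ Finset.range N, ‖R k x‖ ^ 2 := by
      rw [ContinuousLinearMap.sum_apply, sum_inner, map_sum]
      exact Finset.sum_congr rfl fun k _ => by rw [key k, inner_self_eq_norm_sq]
    have h := (hsum N).2 x
    rw [ContinuousLinearMap.reApplyInnerSelf_apply, ContinuousLinearMap.sub_apply,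
      ContinuousLinearMap.one_apply, inner_sub_left, map_sub, inner_self_eq_norm_sq, h2] at h
    calc ∑ k ∈ s, ‖R k x‖ ^ 2 ≤ ∑ k ∈ Finset.range N, ‖R k x‖ ^ 2 :=
          Finset.sum_le_sum_of_subset_of_nonneg hN fun _ _ _ => sq_nonneg _
      _ ≤ ‖x‖ ^ 2 := by linarith
  have hsumm : ∀ x : H, Summable fun k => ‖R k x‖ ^ 2 := fun x =>
    summable_of_sum_range_le (fun k => sq_nonneg _) fun n => hsq x (Finset.range n)
  -- pointwise inner product bound
  have hib : ∀ (k : ℕ) (x v : H), ‖(inner ℂ (T k x) v : ℂ)‖ ≤ ‖R k x‖ * ‖R k v‖ := by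
    intro k x v
    have h1 : (inner ℂ (T k x) v : ℂ) = inner ℂ ((C k) (R k x)) (R k v) := by
      show (inner ℂ ((R k * C k * R k) x) v : ℂ) = _
      rw [ContinuousLinearMap.mul_apply, ContinuousLinearMap.mul_apply]
      exact (hR k).1 _ _
    rw [h1]
    calc ‖(inner ℂ ((C k) (R k x)) (R k v) : ℂ)‖ ≤ ‖(C k) (R k x)‖ * ‖R k v‖ :=
          norm_inner_le_norm _ _
      _ ≤ (‖C k‖ * ‖R k x‖) * ‖R k v‖ := by
          gcongr
          exact (C k).le_opNorm _
      _ ≤ (1 * ‖R k x‖) * ‖R k v‖ := by gcongr; exact hC k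
      _ = ‖R k x‖ * ‖R k v‖ := by ring
  -- Cauchy-Schwarz norm bound for finset partial sums
  have hnorm : ∀ (x : H) (s : Finset ℕ),
      ‖∑ k ∈ s, T k x‖ ≤ Real.sqrt (∑ k ∈ s, ‖R k x‖ ^ 2) := by
    intro x s
    set v := ∑ k ∈ s, T k x with hv
    set c := Real.sqrt (∑ k ∈ s, ‖R k x‖ ^ 2) with hc
    have hcs : ∑ k ∈ s, ‖R k x‖ * ‖R k v‖
        ≤ c * Real.sqrt (∑ k ∈ s, ‖R k v‖ ^ 2) := by
      have h := Finset.sum_mul_sq_le_sq_mul_sq s (fun k => ‖R k x‖) (fun k => ‖R k v‖)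
      have h0 : (0:ℝ) ≤ ∑ k ∈ s, ‖R k x‖ * ‖R k v‖ :=
        Finset.sum_nonneg fun k _ => mul_nonneg (norm_nonneg _) (norm_nonneg _)
      calc ∑ k ∈ s, ‖R k x‖ * ‖R k v‖
          = Real.sqrt ((∑ k ∈ s, ‖R k x‖ * ‖R k v‖) ^ 2) := (Real.sqrt_sq h0).symm
        _ ≤ Real.sqrt ((∑ k ∈ s, ‖R k x‖ ^ 2) * ∑ k ∈ s, ‖R k v‖ ^ 2) := Real.sqrt_le_sqrt h
        _ = c * Real.sqrt (∑ k ∈ s, ‖R k v‖ ^ 2) :=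
            Real.sqrt_mul (Finset.sum_nonneg fun k _ => sq_nonneg _) _
    have h1 : ‖v‖ ^ 2 ≤ c * ‖v‖ := by
      calc ‖v‖ ^ 2 = RCLike.re (inner ℂ v v : ℂ) := (inner_self_eq_norm_sq v).symm
        _ ≤ ‖(inner ℂ v v : ℂ)‖ := RCLike.re_le_norm _
        _ = ‖∑ k ∈ s, (inner ℂ (T k x) v : ℂ)‖ := by rw [hv, sum_inner]
        _ ≤ ∑ k ∈ s, ‖(inner ℂ (T k x) v : ℂ)‖ := norm_sum_le _ _
        _ ≤ ∑ k ∈ s, ‖R k x‖ * ‖R k v‖ := Finset.sum_le_sum fun k _ => hib k x v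
        _ ≤ c * Real.sqrt (∑ k ∈ s, ‖R k v‖ ^ 2) := hcs
        _ ≤ c * ‖v‖ := by
            have hcn : (0:ℝ) ≤ c := Real.sqrt_nonneg _
            refine mul_le_mul_of_nonneg_left ?_ hcn
            calc Real.sqrt (∑ k ∈ s, ‖R k v‖ ^ 2) ≤ Real.sqrt (‖v‖ ^ 2) :=
                    Real.sqrt_le_sqrt (hsq v s)
                _ = ‖v‖ := Real.sqrt_sq (norm_nonneg v)
    rcases (norm_nonneg v).eq_or_lt with h | h
    · rw [← h]; exact Real.sqrt_nonneg _
    · have h2 : ‖v‖ * ‖v‖ ≤ c * ‖v‖ := by nlinarith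
      exact le_of_mul_le_mul_right h2 h
  have hbound : ∀ (x : H) (s : Finset ℕ), ‖∑ k ∈ s, T k x‖ ≤ ‖x‖ := by
    intro x s
    refine (hnorm x s).trans ?_
    calc Real.sqrt (∑ k ∈ s, ‖R k x‖ ^ 2) ≤ Real.sqrt (‖x‖ ^ 2) := Real.sqrt_le_sqrt (hsq x s)
      _ = ‖x‖ := Real.sqrt_sq (norm_nonneg x)
  -- summability of the series in H
  have hTs : ∀ x : H, Summable fun k => T k x := by
    intro x
    rw [summable_iff_vanishing_norm]
    intro ε hε
    obtain ⟨s, hs⟩ := summable_iff_vanishing_norm.1 (hsumm x) (ε ^ 2) (by positivity)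
    refine ⟨s, fun t ht => ?_⟩
    have h2 := hs t ht
    have h3 : ∑ k ∈ t, ‖R k x‖ ^ 2 < ε ^ 2 :=
      (le_abs_self _).trans_lt (by rwa [Real.norm_eq_abs] at h2)
    calc ‖∑ k ∈ t, T k x‖ ≤ Real.sqrt (∑ k ∈ t, ‖R k x‖ ^ 2) := hnorm x t
      _ < Real.sqrt (ε ^ 2) := by
          apply Real.sqrt_lt_sqrt (Finset.sum_nonneg fun k _ => sq_nonneg _) h3
      _ = ε := Real.sqrt_sq hε.le
  -- define Y
  let Ylin : H →ₗ[ℂ] H :=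
    { toFun := fun x => ∑' k, T k x
      map_add' := fun x y => by
        rw [← Summable.tsum_add (hTs x) (hTs y)]
        exact tsum_congr fun k => map_add (T k) x y
      map_smul' := fun c x => by
        simp only [RingHom.id_apply]
        rw [← ((hTs x).hasSum.const_smul c).tsum_eq]
        exact tsum_congr fun k => map_smul (T k) c x }
  have hYb : ∀ x : H, ‖Ylin x‖ ≤ 1 * ‖x‖ := by
    intro x
    rw [one_mul]
    exact le_of_tendsto ((hTs x).hasSum.norm) (Filter.Eventually.of_forall fun s => hbound x s)
  refine ⟨Ylin.mkContinuous 1 hYb, Ylin.mkContinuous_norm_le zero_le_one hYb, fun x y => ?_⟩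
  have h1 : Tendsto (fun N => ∑ k ∈ Finset.range N, T k x) atTop
      (nhds (Ylin.mkContinuous 1 hYb x)) := (hTs x).hasSum.tendsto_sum_nat
  have h2 := Filter.Tendsto.inner (𝕜 := ℂ) h1 (tendsto_const_nhds (x := y))
  have h3 : ∀ N : ℕ, ((∑ k ∈ Finset.range N, R k * C k * R k) x) = ∑ k ∈ Finset.range N, T k x :=
    fun N => ContinuousLinearMap.sum_apply _ _ _
  simpa only [h3, ContinuousLinearMap.sum_apply] using h2
end
end
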